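/- Let (X,T) be a topological dynamical system. The following are equivalent: (1) (X,T) is uniquely ergodic; (2) there exists μ ∈ M_T(X) such that for every x ∈ X, V^log_T(x) = {μ}; (3) there exists μ ∈ M_T(X) such that for every x ∈ X, Ṽ^log_T(x) = {μ}. -/

import Mathlib

open Filter MeasureTheory Topology

/-- The `n`-th harmonic number `H_n = ∑_{k=1}^n 1/k` as a real number. -/
noncomputable def H (n : ℕ) : ℝ := ∑ k ∈ Finset.range n, (1 : ℝ) / (k + 1)

/-- A Borel probability measure `μ` is `T`-invariant if `μ(T⁻¹B) = μ(B)` for every Borel set. -/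
def IsInvariantMeasure {X : Type*} [MetricSpace X] [MeasurableSpace X]
    (T : X → X) (μ : ProbabilityMeasure X) : Prop :=
  ∀ B : Set X, MeasurableSet B → μ (T ⁻¹' B) = μ B

/-- `V^log_T(x)`: all weak* limits of the logarithmic empirical measures
`(1/H_{n_i}) ∑_{k=1}^{n_i} (1/k) δ_{T^{k-1}x}` along strictly increasing sequences `n_i → ∞`. -/
def VTlog {X : Type*} [MetricSpace X] [MeasurableSpace X] (T : X → X) (x : X) :
    Set (ProbabilityMeasure X) :=
  {μ | ∃ n : ℕ → ℕ, StrictMono n ∧ ∀ f : C(X, ℝ),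
    Tendsto (fun i : ℕ =>
        (1 / H (n i)) * ∑ k ∈ Finset.range (n i), (1 / (k + 1 : ℝ)) * f (T^[k] x))
      atTop (𝓝 (∫ y, f y ∂(μ : Measure X)))}

/-- `Ṽ^log_T(x)`: all weak* limits of the window logarithmic empirical measures
`(1/H_{n_i-m_i}) ∑_{k=m_i+1}^{n_i} (1/(k-m_i)) δ_{T^{k-1}x}` with `n_i - m_i → ∞`. -/
def VTtildeLog {X : Type*} [MetricSpace X] [MeasurableSpace X] (T : X → X) (x : X) :
    Set (ProbabilityMeasure X) :=
  {μ | ∃ m n : ℕ → ℕ, (∀ i, m i < n i) ∧ Tendsto (fun i => n i - m i) atTop atTop ∧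
    ∀ f : C(X, ℝ),
      Tendsto (fun i : ℕ => (1 / H (n i - m i)) *
          ∑ j ∈ Finset.range (n i - m i), (1 / (j + 1 : ℝ)) * f (T^[m i + j] x))
        atTop (𝓝 (∫ y, f y ∂(μ : Measure X)))}


section UELogAux

open Filter MeasureTheory Topology TopologicalSpace BoundedContinuousFunction
open scoped NNReal ENNReal

set_option linter.unusedSectionVars false
set_option linter.unnecessarySimpa false
set_option maxHeartbeats 1000000

variable {X : Type*} [MetricSpace X] [CompactSpace X] [Nonempty X]
  [MeasurableSpace X] [BorelSpace X]

lemma cm_integrable (μ : Measure X) [IsFiniteMeasure μ] (f : C(X, ℝ)) :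
    Integrable (fun x => f x) μ := by
  exact (BoundedContinuousFunction.integrable μ (mkOfCompact f))

lemma abs_integral_sub_le (μ : Measure X) [IsProbabilityMeasure μ] (f g : C(X, ℝ)) :
    |∫ x, f x ∂μ - ∫ x, g x ∂μ| ≤ dist f g := by
  rw [← integral_sub (cm_integrable μ f) (cm_integrable μ g)]
  have := norm_integral_le_of_norm_le_const (μ := μ) (f := fun x => f x - g x)
    (C := dist f g) (.of_forall fun x => by
      simpa [Real.norm_eq_abs, ← Real.dist_eq] using
        ContinuousMap.dist_apply_le_dist (f := f) (g := g) x)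
  simpa [measure_univ] using this

/-- Every sequence of Borel probability measures on a compact metric space has a
weak-* convergent subsequence. -/
theorem exists_subseq_tendsto (μs : ℕ → ProbabilityMeasure X) :
    ∃ (φ : ℕ → ℕ) (ρ : ProbabilityMeasure X), StrictMono φ ∧
      Tendsto (fun i => μs (φ i)) atTop (𝓝 ρ) := by
  obtain ⟨D, hD⟩ := TopologicalSpace.exists_dense_seq C(X, ℝ)
  set S : Set (ℕ → ℝ) :=
    Set.univ.pi fun g => Set.Icc (-‖mkOfCompact (D g)‖) ‖mkOfCompact (D g)‖ with hS
  have hScpt : IsCompact S := isCompact_univ_pi fun g => isCompact_Icc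
  set F : ℕ → ℕ → ℝ := fun i g => ∫ x, D g x ∂(μs i : Measure X) with hF
  have hmem : ∀ i, F i ∈ S := by
    intro i g _
    have h1 : |∫ x, D g x ∂(μs i : Measure X)| ≤ ‖mkOfCompact (D g)‖ := by
      have := norm_integral_le_of_norm_le_const (μ := (μs i : Measure X)) (f := fun x => D g x)
        (C := ‖mkOfCompact (D g)‖) (.of_forall fun x => by
          simpa using (mkOfCompact (D g)).norm_coe_le_norm x)
      simpa [measure_univ] using this
    exact abs_le.mp h1
  obtain ⟨a, -, φ, hφ, hconv⟩ := hScpt.tendsto_subseq hmem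
  have hptwise : ∀ g : ℕ, Tendsto (fun i => F (φ i) g) atTop (𝓝 (a g)) := by
    intro g
    simpa using tendsto_pi_nhds.mp hconv g
  have hCauchy : ∀ f : C(X, ℝ), ∃ c : ℝ,
      Tendsto (fun i => ∫ x, f x ∂(μs (φ i) : Measure X)) atTop (𝓝 c) := by
    intro f
    apply cauchySeq_tendsto_of_complete
    rw [Metric.cauchySeq_iff]
    intro ε hε
    obtain ⟨g, hg⟩ := Metric.denseRange_iff.mp hD f (ε / 4) (by positivity)
    obtain ⟨N, hN⟩ := Metric.cauchySeq_iff.mp (hptwise g).cauchySeq (ε / 4) (by positivity)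
    refine ⟨N, fun m hm n hn => ?_⟩
    have key : ∀ i : ℕ, dist (∫ x, f x ∂(μs (φ i) : Measure X)) (F (φ i) g) ≤ dist f (D g) := by
      intro i
      rw [Real.dist_eq]
      exact abs_integral_sub_le _ f (D g)
    calc dist (∫ x, f x ∂(μs (φ m) : Measure X)) (∫ x, f x ∂(μs (φ n) : Measure X))
        ≤ dist (∫ x, f x ∂(μs (φ m) : Measure X)) (F (φ m) g) +
            dist (F (φ m) g) (F (φ n) g) +
            dist (F (φ n) g) (∫ x, f x ∂(μs (φ n) : Measure X)) := dist_triangle4 _ _ _ _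
      _ < ε := by
          have h1 := key m
          have h2 := hN m hm n hn
          have h3 := key n
          rw [dist_comm] at h3
          linarith
  choose L hL using hCauchy
  -- basic properties of the limit functional L
  have hL0 : L 0 = 0 := by
    refine tendsto_nhds_unique (hL 0) ?_
    simpa using (tendsto_const_nhds : Tendsto (fun _ : ℕ => (0 : ℝ)) atTop (𝓝 0))
  have hL1 : L 1 = 1 := by
    refine tendsto_nhds_unique (hL 1) ?_
    have : ∀ i : ℕ, ∫ x, (1 : C(X, ℝ)) x ∂(μs (φ i) : Measure X) = 1 := by
      intro i
      simp [measure_univ]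
    simpa [this] using (tendsto_const_nhds : Tendsto (fun _ : ℕ => (1 : ℝ)) atTop (𝓝 1))
  have hLadd : ∀ f g : C(X, ℝ), L (f + g) = L f + L g := by
    intro f g
    refine tendsto_nhds_unique (hL (f + g)) ?_
    have : ∀ i : ℕ, ∫ x, (f + g) x ∂(μs (φ i) : Measure X) =
        (∫ x, f x ∂(μs (φ i) : Measure X)) + ∫ x, g x ∂(μs (φ i) : Measure X) := by
      intro i
      simpa using integral_add (cm_integrable _ f) (cm_integrable _ g)
    exact ((hL f).add (hL g)).congr fun i => (this i).symm
  have hLmono : ∀ f g : C(X, ℝ), (∀ x, f x ≤ g x) → L f ≤ L g := by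
    intro f g h
    exact le_of_tendsto_of_tendsto' (hL f) (hL g) fun i =>
      integral_mono (cm_integrable _ f) (cm_integrable _ g) h
  have hLnn : ∀ f : C(X, ℝ), (∀ x, 0 ≤ f x) → 0 ≤ L f := by
    intro f hf
    simpa [hL0] using hLmono 0 f (by simpa using hf)
  -- the content associated to L
  set A : Set X → Set ℝ := fun K =>
    L '' {f : C(X, ℝ) | (∀ x, 0 ≤ f x) ∧ ∀ x ∈ K, 1 ≤ f x} with hA
  have hA_ne : ∀ K : Set X, (A K).Nonempty := by
    intro K
    exact ⟨L 1, 1, ⟨fun x => by simp, fun x _ => by simp⟩, rfl⟩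
  have hA_bdd : ∀ K : Set X, BddBelow (A K) := by
    intro K
    exact ⟨0, by rintro r ⟨f, hf, rfl⟩; exact hLnn f hf.1⟩
  set c : Set X → ℝ := fun K => sInf (A K) with hc
  have hc_nonneg : ∀ K, 0 ≤ c K := fun K =>
    le_csInf (hA_ne K) (by rintro r ⟨f, hf, rfl⟩; exact hLnn f hf.1)
  have hc_le : ∀ (K : Set X) (f : C(X, ℝ)), (∀ x, 0 ≤ f x) → (∀ x ∈ K, 1 ≤ f x) → c K ≤ L f :=
    fun K f h1 h2 => csInf_le (hA_bdd K) ⟨f, ⟨h1, h2⟩, rfl⟩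
  have hmono : ∀ K₁ K₂ : Set X, K₁ ⊆ K₂ → c K₁ ≤ c K₂ := by
    intro K₁ K₂ h
    exact csInf_le_csInf (hA_bdd _) (hA_ne _)
      (Set.image_mono fun f hf => ⟨hf.1, fun x hx => hf.2 x (h hx)⟩)
  have hsup_le : ∀ K₁ K₂ : Set X, c (K₁ ∪ K₂) ≤ c K₁ + c K₂ := by
    intro K₁ K₂
    apply le_of_forall_pos_le_add
    intro ε hε
    obtain ⟨r₁, ⟨f₁, hf₁, rfl⟩, hr₁⟩ :=
      exists_lt_of_csInf_lt (hA_ne K₁) (lt_add_of_pos_right (c K₁) (half_pos hε))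
    obtain ⟨r₂, ⟨f₂, hf₂, rfl⟩, hr₂⟩ :=
      exists_lt_of_csInf_lt (hA_ne K₂) (lt_add_of_pos_right (c K₂) (half_pos hε))
    have : c (K₁ ∪ K₂) ≤ L (f₁ + f₂) := by
      apply hc_le
      · intro x
        simpa using add_nonneg (hf₁.1 x) (hf₂.1 x)
      · rintro x (hx | hx)
        · simpa using le_add_of_le_of_nonneg (hf₁.2 x hx) (hf₂.1 x)
        · simpa using le_add_of_nonneg_of_le (hf₁.1 x) (hf₂.2 x hx)
    rw [hLadd] at this
    linarith
  have hsup_disj : ∀ K₁ K₂ : Set X, IsClosed K₁ → IsClosed K₂ → Disjoint K₁ K₂ →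
      c K₁ + c K₂ ≤ c (K₁ ∪ K₂) := by
    intro K₁ K₂ hK₁ hK₂ hd
    apply le_csInf (hA_ne _)
    rintro r ⟨f, ⟨hf0, hf1⟩, rfl⟩
    obtain ⟨u, hu0, hu1, hu01⟩ := exists_continuous_zero_one_of_isClosed hK₁ hK₂ hd
    have e1 : c K₁ ≤ L (f * (1 - u)) := by
      apply hc_le
      · intro x
        have h2 := (hu01 x).2
        have h1 := (hu01 x).1
        have h0 := hf0 x
        simp only [ContinuousMap.mul_apply, ContinuousMap.sub_apply, ContinuousMap.one_apply]
        nlinarith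
      · intro x hx
        have hu : u x = 0 := hu0 hx
        have := hf1 x (Or.inl hx)
        simp only [ContinuousMap.mul_apply, ContinuousMap.sub_apply, ContinuousMap.one_apply, hu]
        linarith
    have e2 : c K₂ ≤ L (f * u) := by
      apply hc_le
      · intro x
        exact mul_nonneg (hf0 x) (hu01 x).1
      · intro x hx
        have hu : u x = 1 := hu1 hx
        have := hf1 x (Or.inr hx)
        simp only [ContinuousMap.mul_apply, hu, mul_one]
        linarith
    have e3 : L (f * (1 - u)) + L (f * u) = L f := by
      rw [← hLadd]
      congr 1
      ext x
      simp only [ContinuousMap.add_apply, ContinuousMap.mul_apply, ContinuousMap.sub_apply,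
        ContinuousMap.one_apply]
      ring
    linarith
  -- build the content and its measure
  set Γ : Content X :=
    { toFun := fun K => Real.toNNReal (c K)
      mono' := fun K₁ K₂ h => Real.toNNReal_mono (hmono _ _ h)
      sup_disjoint' := by
        intro K₁ K₂ hd h₁ h₂
        have : c (↑(K₁ ⊔ K₂) : Set X) = c K₁ + c K₂ := by
          rw [TopologicalSpace.Compacts.coe_sup]
          exact le_antisymm (hsup_le _ _) (hsup_disj _ _ h₁ h₂ hd)
        simp only [this, Real.toNNReal_add (hc_nonneg _) (hc_nonneg _)]
      sup_le' := by
        intro K₁ K₂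
        have : c (↑(K₁ ⊔ K₂) : Set X) ≤ c K₁ + c K₂ := by
          rw [TopologicalSpace.Compacts.coe_sup]; exact hsup_le _ _
        calc Real.toNNReal (c (↑(K₁ ⊔ K₂) : Set X)) ≤ Real.toNNReal (c K₁ + c K₂) :=
              Real.toNNReal_mono this
          _ = _ := Real.toNNReal_add (hc_nonneg _) (hc_nonneg _) } with hΓ
  set ν : Measure X := Γ.measure with hν
  have hc_univ : c Set.univ = 1 := by
    apply le_antisymm
    · have := hc_le Set.univ 1 (fun x => by simp) (fun x _ => by simp)
      simpa [hL1] using this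
    · apply le_csInf (hA_ne _)
      rintro r ⟨f, ⟨hf0, hf1⟩, rfl⟩
      have := hLmono 1 f (fun x => by simpa using hf1 x trivial)
      simpa [hL1] using this
  have hν_univ : ν Set.univ = 1 := by
    rw [hν, Γ.measure_apply MeasurableSet.univ, Γ.outerMeasure_of_isOpen Set.univ isOpen_univ]
    have := Γ.innerContent_of_isCompact (K := Set.univ) isCompact_univ isOpen_univ
    rw [this]
    show ((Real.toNNReal (c Set.univ) : ℝ≥0) : ℝ≥0∞) = 1
    rw [hc_univ]
    simp
  have hprob : IsProbabilityMeasure ν := ⟨hν_univ⟩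
  set ρ : ProbabilityMeasure X := ⟨ν, hprob⟩ with hρ
  refine ⟨φ, ρ, hφ, ?_⟩
  apply MeasureTheory.tendsto_of_forall_isOpen_le_liminf
  intro G hG
  set b : ℕ → ℝ≥0 := fun i => μs (φ i) G with hb
  have hb_le_one : ∀ i, b i ≤ 1 := fun i => (μs (φ i)).apply_le_one G
  -- compact subsets of G are dominated by the liminf
  have key2 : ∀ K : TopologicalSpace.Compacts X, (K : Set X) ⊆ G →
      Real.toNNReal (c K) ≤ atTop.liminf b := by
    intro K hKG
    obtain ⟨u, hu0, hu1, hu01⟩ := exists_continuous_zero_one_of_isClosed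
      (isClosed_compl_iff.mpr hG) K.isCompact.isClosed
      (Set.disjoint_left.mpr fun x hx hxK => hx (hKG hxK))
    have hcK : c K ≤ L u := hc_le _ u (fun x => (hu01 x).1) (fun x hx => (hu1 hx).ge)
    have hint : ∀ i : ℕ, ∫ x, u x ∂(μs (φ i) : Measure X) ≤ ((b i : ℝ≥0) : ℝ) := by
      intro i
      have h1 : ∫ x, u x ∂(μs (φ i) : Measure X) ≤
          ∫ x, G.indicator (fun _ => (1 : ℝ)) x ∂(μs (φ i) : Measure X) := by
        apply integral_mono (cm_integrable _ u)
          ((integrable_const (1 : ℝ)).indicator hG.measurableSet)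
        intro x
        by_cases hx : x ∈ G
        · simpa [Set.indicator_of_mem hx] using (hu01 x).2
        · have : u x = 0 := hu0 (by simpa using hx)
          simp [Set.indicator_of_notMem hx, this]
      rw [integral_indicator_const (1 : ℝ) hG.measurableSet] at h1
      have h2 : ((μs (φ i) : Measure X) G).toReal = ((b i : ℝ≥0) : ℝ) := by
        rw [← MeasureTheory.ProbabilityMeasure.ennreal_coeFn_eq_coeFn_toMeasure,
          ENNReal.coe_toReal]
      rw [measureReal_def, h2, smul_eq_mul, mul_one] at h1
      exact h1
    have hLu_le : L u ≤ atTop.liminf (fun i => ((b i : ℝ≥0) : ℝ)) := by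
      rw [← (hL u).liminf_eq]
      exact Filter.liminf_le_liminf (.of_forall hint)
        (hu := Filter.isBoundedUnder_of ⟨0, fun i => integral_nonneg fun x => (hu01 x).1⟩)
        (hv := (Filter.isBoundedUnder_of ⟨1, fun i => by
          exact_mod_cast hb_le_one i⟩).isCoboundedUnder_ge)
    apply le_of_forall_lt_imp_le_of_dense
    intro q hq
    have hq' : (q : ℝ) < c K := Real.lt_toNNReal_iff_coe_lt.mp hq
    have : (q : ℝ) < atTop.liminf (fun i => ((b i : ℝ≥0) : ℝ)) := lt_of_lt_of_le hq'
      (le_trans hcK hLu_le)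
    have hev := Filter.eventually_lt_of_lt_liminf this
      (hu := Filter.isBoundedUnder_of ⟨0, fun i => (b i).coe_nonneg⟩)
    exact Filter.le_liminf_of_le
      (hf := (Filter.isBoundedUnder_of ⟨1, fun i => hb_le_one i⟩).isCoboundedUnder_ge)
      (h := hev.mono fun i hi => le_of_lt (by exact_mod_cast hi))
  -- conclude the open-set inequality
  have : (ρ G : ℝ≥0∞) ≤ ((atTop.liminf b : ℝ≥0) : ℝ≥0∞) := by
    rw [MeasureTheory.ProbabilityMeasure.ennreal_coeFn_eq_coeFn_toMeasure]
    show ν G ≤ _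
    rw [hν, Γ.measure_apply hG.measurableSet, Γ.outerMeasure_of_isOpen G hG]
    apply iSup₂_le
    intro K hK
    exact ENNReal.coe_le_coe.mpr (key2 K hK)
  exact_mod_cast this

lemma H_nonneg (n : ℕ) : 0 ≤ H n :=
  Finset.sum_nonneg fun k _ => by positivity

lemma H_pos {n : ℕ} (hn : 1 ≤ n) : 0 < H n := by
  apply Finset.sum_pos (fun k _ => by positivity)
  exact Finset.nonempty_range_iff.mpr (by omega)

lemma H_tendsto : Tendsto H atTop atTop :=
  Real.tendsto_sum_range_one_div_nat_succ_atTop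

/-- The window logarithmic empirical measure with window `[m, m+l]`. -/
noncomputable def emp (T : X → X) (x : X) (m l : ℕ) : Measure X :=
  (ENNReal.ofReal (H (l + 1)))⁻¹ •
    ∑ j ∈ Finset.range (l + 1), ENNReal.ofReal (1 / (j + 1 : ℝ)) • Measure.dirac (T^[m + j] x)

lemma emp_univ (T : X → X) (x : X) (m l : ℕ) : emp T x m l Set.univ = 1 := by
  rw [emp, Measure.smul_apply, Measure.finset_sum_apply]
  simp only [Measure.smul_apply, measure_univ, smul_eq_mul, mul_one]
  rw [← ENNReal.ofReal_sum_of_nonneg (fun j _ => by positivity)]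
  exact ENNReal.inv_mul_cancel (by
      simp only [ne_eq, ENNReal.ofReal_eq_zero, not_le]
      exact H_pos (by omega : 1 ≤ l + 1))
    ENNReal.ofReal_ne_top

instance emp_prob (T : X → X) (x : X) (m l : ℕ) : IsProbabilityMeasure (emp T x m l) :=
  ⟨emp_univ T x m l⟩

lemma integral_emp (T : X → X) (x : X) (m l : ℕ) (f : C(X, ℝ)) :
    ∫ y, f y ∂(emp T x m l) =
      (1 / H (l + 1)) * ∑ j ∈ Finset.range (l + 1), (1 / (j + 1 : ℝ)) * f (T^[m + j] x) := by
  rw [emp, integral_smul_measure, integral_finset_sum_measure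
    (fun j _ => (cm_integrable _ f).smul_measure ENNReal.ofReal_ne_top)]
  have : ∀ j ∈ Finset.range (l + 1),
      ∫ y, f y ∂(ENNReal.ofReal (1 / (j + 1 : ℝ)) • Measure.dirac (T^[m + j] x)) =
        (1 / (j + 1 : ℝ)) * f (T^[m + j] x) := by
    intro j _
    rw [integral_smul_measure, integral_dirac, ENNReal.toReal_ofReal (by positivity),
      smul_eq_mul]
  rw [Finset.sum_congr rfl this, ENNReal.toReal_inv, ENNReal.toReal_ofReal (H_nonneg _),
    smul_eq_mul, one_div]

lemma sum_shift_bound (T : X → X) (x : X) (f : C(X, ℝ)) (C : ℝ)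
    (hC : ∀ y : X, |f y| ≤ C) (m k : ℕ) :
    |(∑ j ∈ Finset.range (k + 1), (1 / (j + 1 : ℝ)) * f (T^[m + j + 1] x)) -
      ∑ j ∈ Finset.range (k + 1), (1 / (j + 1 : ℝ)) * f (T^[m + j] x)| ≤ 3 * C := by
  have hC0 : 0 ≤ C := le_trans (abs_nonneg _) (hC x)
  set a : ℕ → ℝ := fun j => f (T^[m + j] x) with ha
  have hA : (∑ j ∈ Finset.range (k + 1), (1 / (j + 1 : ℝ)) * f (T^[m + j + 1] x)) =
      (∑ j ∈ Finset.range k, (1 / (j + 1 : ℝ)) * a (j + 1)) + (1 / (k + 1 : ℝ)) * a (k + 1) := by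
    rw [Finset.sum_range_succ]
    congr 1
  have hB : (∑ j ∈ Finset.range (k + 1), (1 / (j + 1 : ℝ)) * f (T^[m + j] x)) =
      (∑ j ∈ Finset.range k, (1 / (j + 2 : ℝ)) * a (j + 1)) + a 0 := by
    rw [Finset.sum_range_succ' (fun j => (1 / (j + 1 : ℝ)) * a j) k]
    congr 1
    · apply Finset.sum_congr rfl
      intro j _
      push_cast
      ring_nf
    · simp [ha]
  rw [hA, hB]
  have hsplit : (∑ j ∈ Finset.range k, ((1 / (j + 1 : ℝ)) - (1 / (j + 2 : ℝ))) * a (j + 1))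
      = (∑ j ∈ Finset.range k, (1 / (j + 1 : ℝ)) * a (j + 1))
        - ∑ j ∈ Finset.range k, (1 / (j + 2 : ℝ)) * a (j + 1) := by
    rw [← Finset.sum_sub_distrib]
    exact Finset.sum_congr rfl fun j _ => by ring
  have key : (∑ j ∈ Finset.range k, (1 / (j + 1 : ℝ)) * a (j + 1)) + (1 / (k + 1 : ℝ)) * a (k + 1)
      - ((∑ j ∈ Finset.range k, (1 / (j + 2 : ℝ)) * a (j + 1)) + a 0) =
      (∑ j ∈ Finset.range k, ((1 / (j + 1 : ℝ)) - (1 / (j + 2 : ℝ))) * a (j + 1))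
        + ((1 / (k + 1 : ℝ)) * a (k + 1) - a 0) := by
    rw [hsplit]
    ring
  rw [key]
  have habs : ∀ j : ℕ, |a j| ≤ C := fun j => hC _
  have h1 : |∑ j ∈ Finset.range k, ((1 / (j + 1 : ℝ)) - (1 / (j + 2 : ℝ))) * a (j + 1)| ≤ C := by
    calc |∑ j ∈ Finset.range k, ((1 / (j + 1 : ℝ)) - (1 / (j + 2 : ℝ))) * a (j + 1)|
        ≤ ∑ j ∈ Finset.range k, |((1 / (j + 1 : ℝ)) - (1 / (j + 2 : ℝ))) * a (j + 1)| :=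
          Finset.abs_sum_le_sum_abs _ _
      _ ≤ ∑ j ∈ Finset.range k, ((1 / (j + 1 : ℝ)) - (1 / (j + 2 : ℝ))) * C := by
          apply Finset.sum_le_sum
          intro j _
          rw [abs_mul]
          have hpos : (0 : ℝ) ≤ (1 / (j + 1 : ℝ)) - (1 / (j + 2 : ℝ)) := by
            have : (0:ℝ) < j + 1 := by positivity
            have : (0:ℝ) < j + 2 := by positivity
            rw [sub_nonneg]
            gcongr
            · linarith
          rw [abs_of_nonneg hpos]
          exact mul_le_mul_of_nonneg_left (habs _) hpos
      _ = ((1 : ℝ) - 1 / (k + 1 : ℝ)) * C := by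
          rw [← Finset.sum_mul]
          congr 1
          have te := Finset.sum_range_sub' (fun j : ℕ => (1 / (j + 1 : ℝ))) k
          simp only [Nat.cast_add, Nat.cast_one, Nat.cast_zero] at te
          calc ∑ j ∈ Finset.range k, ((1 / (j + 1 : ℝ)) - (1 / (j + 2 : ℝ)))
              = ∑ j ∈ Finset.range k, ((1 / (j + 1 : ℝ)) - (1 / ((j : ℝ) + 1 + 1))) :=
                Finset.sum_congr rfl fun j _ => by ring_nf
            _ = 1 - 1 / (k + 1 : ℝ) := by rw [te]; norm_num
      _ ≤ C := by
          have h2 : (0:ℝ) < k + 1 := by positivity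
          have h3 : (0:ℝ) ≤ 1 / (k + 1 : ℝ) := by positivity
          nlinarith
  have h2 : |(1 / (k + 1 : ℝ)) * a (k + 1) - a 0| ≤ 2 * C := by
    have e1 : |(1 / (k + 1 : ℝ)) * a (k + 1)| ≤ C := by
      rw [abs_mul]
      have h2 : (0:ℝ) < k + 1 := by positivity
      have h4 : |1 / (k + 1 : ℝ)| ≤ 1 := by
        rw [abs_of_nonneg (by positivity)]
        rw [div_le_one h2]
        linarith
      calc |1 / (k + 1 : ℝ)| * |a (k + 1)| ≤ 1 * C :=
            mul_le_mul h4 (habs _) (abs_nonneg _) zero_le_one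
        _ = C := one_mul C
    calc |(1 / (k + 1 : ℝ)) * a (k + 1) - a 0| ≤ |(1 / (k + 1 : ℝ)) * a (k + 1)| + |a 0| :=
          abs_sub _ _
      _ ≤ C + C := add_le_add e1 (habs 0)
      _ = 2 * C := by ring
  calc |(∑ j ∈ Finset.range k, ((1 / (j + 1 : ℝ)) - (1 / (j + 2 : ℝ))) * a (j + 1))
        + ((1 / (k + 1 : ℝ)) * a (k + 1) - a 0)|
      ≤ |∑ j ∈ Finset.range k, ((1 / (j + 1 : ℝ)) - (1 / (j + 2 : ℝ))) * a (j + 1)|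
        + |(1 / (k + 1 : ℝ)) * a (k + 1) - a 0| := abs_add_le _ _
    _ ≤ C + 2 * C := add_le_add h1 h2
    _ = 3 * C := by ring

lemma integral_eq_of_invariant_integrals (μ ν : ProbabilityMeasure X)
    (h : ∀ f : C(X, ℝ), ∫ y, f y ∂(μ : Measure X) = ∫ y, f y ∂(ν : Measure X)) : μ = ν := by
  apply MeasureTheory.ProbabilityMeasure.toMeasure_injective
  apply MeasureTheory.ext_of_forall_lintegral_eq_of_IsFiniteMeasure
  intro f
  have hint : ∀ ρ : ProbabilityMeasure X,
      Integrable (fun x => (f x : ℝ)) (ρ : Measure X) :=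
    fun ρ => cm_integrable _ ⟨fun x => (f x : ℝ), NNReal.continuous_coe.comp f.continuous⟩
  rw [MeasureTheory.lintegral_coe_eq_integral f (hint μ),
    MeasureTheory.lintegral_coe_eq_integral f (hint ν)]
  congr 1
  exact h ⟨fun x => (f x : ℝ), NNReal.continuous_coe.comp f.continuous⟩

lemma map_eq_self_of_integrals (T : X → X) (hT : Continuous T) (ρ : ProbabilityMeasure X)
    (h : ∀ f : C(X, ℝ), ∫ y, f (T y) ∂(ρ : Measure X) = ∫ y, f y ∂(ρ : Measure X)) :
    Measure.map T (ρ : Measure X) = (ρ : Measure X) := by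
  haveI : IsProbabilityMeasure (Measure.map T (ρ : Measure X)) :=
    MeasureTheory.Measure.isProbabilityMeasure_map hT.measurable.aemeasurable
  apply MeasureTheory.ext_of_forall_lintegral_eq_of_IsFiniteMeasure
  intro f
  have hc : Continuous fun x => (f x : ℝ) := NNReal.continuous_coe.comp f.continuous
  have hmap : ∫⁻ x, f x ∂(Measure.map T (ρ : Measure X)) = ∫⁻ x, f (T x) ∂(ρ : Measure X) :=
    MeasureTheory.lintegral_map (measurable_coe_nnreal_ennreal.comp f.continuous.measurable)
      hT.measurable
  rw [hmap]
  have h1 : Integrable (fun x => (f (T x) : ℝ)) (ρ : Measure X) :=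
    cm_integrable _ ⟨fun x => (f (T x) : ℝ), hc.comp hT⟩
  have h2 : Integrable (fun x => (f x : ℝ)) (ρ : Measure X) := cm_integrable _ ⟨_, hc⟩
  rw [MeasureTheory.lintegral_coe_eq_integral _ h1, MeasureTheory.lintegral_coe_eq_integral _ h2]
  congr 1
  exact h ⟨fun x => (f x : ℝ), hc⟩

lemma isInvariant_iff_map (T : X → X) (hT : Continuous T) (ρ : ProbabilityMeasure X) :
    IsInvariantMeasure T ρ ↔ Measure.map T (ρ : Measure X) = (ρ : Measure X) := by
  constructor
  · intro h
    apply Measure.ext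
    intro B hB
    rw [Measure.map_apply hT.measurable hB]
    have := h B hB
    have h1 := MeasureTheory.ProbabilityMeasure.ennreal_coeFn_eq_coeFn_toMeasure ρ (T ⁻¹' B)
    have h2 := MeasureTheory.ProbabilityMeasure.ennreal_coeFn_eq_coeFn_toMeasure ρ B
    rw [← h1, ← h2, this]
  · intro h B hB
    have : (ρ : Measure X) (T ⁻¹' B) = (ρ : Measure X) B := by
      conv_rhs => rw [← h]
      rw [Measure.map_apply hT.measurable hB]
    apply ENNReal.coe_injective
    rw [MeasureTheory.ProbabilityMeasure.ennreal_coeFn_eq_coeFn_toMeasure,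
      MeasureTheory.ProbabilityMeasure.ennreal_coeFn_eq_coeFn_toMeasure, this]

/-- Engine B: any limit of window logarithmic empirical measures is invariant. -/
lemma isInvariant_of_tendsto (T : X → X) (hT : Continuous T) (x : X) (m l : ℕ → ℕ)
    (hl : Tendsto l atTop atTop) (ρ : ProbabilityMeasure X)
    (hconv : ∀ f : C(X, ℝ), Tendsto (fun i => (1 / H (l i)) *
        ∑ j ∈ Finset.range (l i), (1 / (j + 1 : ℝ)) * f (T^[m i + j] x)) atTop
      (𝓝 (∫ y, f y ∂(ρ : Measure X)))) :
    IsInvariantMeasure T ρ := by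
  rw [isInvariant_iff_map T hT]
  apply map_eq_self_of_integrals T hT
  intro f
  set g : C(X, ℝ) := f.comp ⟨T, hT⟩ with hg
  have hgf : ∀ y : X, g y = f (T y) := fun y => rfl
  -- difference of the two averages tends to zero
  set C : ℝ := ‖mkOfCompact f‖ with hCdef
  have hC : ∀ y : X, |f y| ≤ C := fun y => by
    simpa [hCdef] using (mkOfCompact f).norm_coe_le_norm y
  have hC0 : 0 ≤ C := le_trans (abs_nonneg _) (hC x)
  have hdiff : Tendsto (fun i => ((1 / H (l i)) *
        ∑ j ∈ Finset.range (l i), (1 / (j + 1 : ℝ)) * g (T^[m i + j] x)) -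
      ((1 / H (l i)) *
        ∑ j ∈ Finset.range (l i), (1 / (j + 1 : ℝ)) * f (T^[m i + j] x))) atTop (𝓝 0) := by
    have hbound : ∀ᶠ i in atTop, ‖((1 / H (l i)) *
        ∑ j ∈ Finset.range (l i), (1 / (j + 1 : ℝ)) * g (T^[m i + j] x)) -
      ((1 / H (l i)) *
        ∑ j ∈ Finset.range (l i), (1 / (j + 1 : ℝ)) * f (T^[m i + j] x))‖ ≤ 3 * C / H (l i) := by
      filter_upwards [hl.eventually_ge_atTop 1] with i hi
      obtain ⟨k, hk⟩ : ∃ k, l i = k + 1 := ⟨l i - 1, by omega⟩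
      have hHpos : 0 < H (l i) := H_pos hi
      have habsD : |(∑ j ∈ Finset.range (l i), (1 / (j + 1 : ℝ)) * g (T^[m i + j] x)) -
          ∑ j ∈ Finset.range (l i), (1 / (j + 1 : ℝ)) * f (T^[m i + j] x)| ≤ 3 * C := by
        have hgs : ∀ j : ℕ, g (T^[m i + j] x) = f (T^[m i + j + 1] x) := by
          intro j
          rw [hgf, ← Function.iterate_succ_apply' T (m i + j) x]
        calc |(∑ j ∈ Finset.range (l i), (1 / (j + 1 : ℝ)) * g (T^[m i + j] x)) -
              ∑ j ∈ Finset.range (l i), (1 / (j + 1 : ℝ)) * f (T^[m i + j] x)|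
            = |(∑ j ∈ Finset.range (k + 1), (1 / (j + 1 : ℝ)) * f (T^[m i + j + 1] x)) -
              ∑ j ∈ Finset.range (k + 1), (1 / (j + 1 : ℝ)) * f (T^[m i + j] x)| := by
              rw [hk]
              congr 2
              exact Finset.sum_congr rfl fun j _ => by rw [hgs j]
          _ ≤ 3 * C := sum_shift_bound T x f C hC (m i) k
      have hfactor : (0:ℝ) ≤ 1 / H (l i) := by positivity
      rw [← mul_sub, Real.norm_eq_abs, abs_mul, abs_of_nonneg hfactor]
      calc 1 / H (l i) * |(∑ j ∈ Finset.range (l i), (1 / (j + 1 : ℝ)) * g (T^[m i + j] x)) -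
            ∑ j ∈ Finset.range (l i), (1 / (j + 1 : ℝ)) * f (T^[m i + j] x)|
          ≤ 1 / H (l i) * (3 * C) := mul_le_mul_of_nonneg_left habsD hfactor
        _ = 3 * C / H (l i) := by ring
    have htend : Tendsto (fun i => 3 * C / H (l i)) atTop (𝓝 0) :=
      Tendsto.div_atTop tendsto_const_nhds (H_tendsto.comp hl)
    exact squeeze_zero_norm' hbound htend
  have := ((hconv g).sub (hconv f)).sub hdiff
  simp only [sub_self, sub_zero] at this
  have h0 : Tendsto (fun _ : ℕ => (0:ℝ)) atTop
      (𝓝 ((∫ y, g y ∂(ρ : Measure X)) - ∫ y, f y ∂(ρ : Measure X))) := by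
    simpa using this
  have := tendsto_nhds_unique h0 tendsto_const_nhds
  have hint : (∫ y, g y ∂(ρ : Measure X)) = ∫ y, f y ∂(ρ : Measure X) := by linarith
  simpa [hgf] using hint

/-- The empirical measure as a probability measure. -/
noncomputable def pemp (T : X → X) (x : X) (m l : ℕ) : ProbabilityMeasure X :=
  ⟨emp T x m l, emp_prob T x m l⟩

lemma integral_pemp (T : X → X) (x : X) (m l : ℕ) (f : C(X, ℝ)) :
    ∫ y, f y ∂(pemp T x m l : Measure X) =
      (1 / H (l + 1)) * ∑ j ∈ Finset.range (l + 1), (1 / (j + 1 : ℝ)) * f (T^[m + j] x) :=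
  integral_emp T x m l f

lemma map_iterate_eq (T : X → X) (hT : Continuous T) (ν : ProbabilityMeasure X)
    (hinv : IsInvariantMeasure T ν) (k : ℕ) :
    Measure.map (T^[k]) (ν : Measure X) = (ν : Measure X) := by
  induction k with
  | zero => simpa [Function.iterate_zero] using Measure.map_id
  | succ k ih =>
      rw [Function.iterate_succ,
        ← Measure.map_map (hT.iterate k).measurable hT.measurable,
        (isInvariant_iff_map T hT ν).mp hinv, ih]

lemma integral_iterate (T : X → X) (hT : Continuous T) (ν : ProbabilityMeasure X)
    (hinv : IsInvariantMeasure T ν) (k : ℕ) (f : C(X, ℝ)) :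
    ∫ y, f (T^[k] y) ∂(ν : Measure X) = ∫ y, f y ∂(ν : Measure X) := by
  rw [← MeasureTheory.integral_map (hT.iterate k).measurable.aemeasurable
    f.continuous.aestronglyMeasurable, map_iterate_eq T hT ν hinv k]

lemma integral_S_eq (T : X → X) (hT : Continuous T) (ν : ProbabilityMeasure X)
    (hinv : IsInvariantMeasure T ν) (f : C(X, ℝ)) {n : ℕ} (hn : 1 ≤ n) :
    ∫ y, ((1 / H n) * ∑ j ∈ Finset.range n, (1 / (j + 1 : ℝ)) * f (T^[j] y))
        ∂(ν : Measure X) = ∫ y, f y ∂(ν : Measure X) := by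
  have hint : ∀ j : ℕ, Integrable (fun y => (1 / (j + 1 : ℝ)) * f (T^[j] y)) (ν : Measure X) :=
    fun j => (cm_integrable _ (f.comp ⟨T^[j], hT.iterate j⟩)).const_mul _
  rw [MeasureTheory.integral_const_mul, MeasureTheory.integral_finset_sum _ (fun j _ => hint j)]
  have : ∀ j ∈ Finset.range n, ∫ y, (1 / (j + 1 : ℝ)) * f (T^[j] y) ∂(ν : Measure X) =
      (1 / (j + 1 : ℝ)) * ∫ y, f y ∂(ν : Measure X) := by
    intro j _
    rw [MeasureTheory.integral_const_mul, integral_iterate T hT ν hinv j f]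
  rw [Finset.sum_congr rfl this, ← Finset.sum_mul]
  have hH : (∑ j ∈ Finset.range n, (1 / (j + 1 : ℝ))) = H n := rfl
  rw [hH, ← mul_assoc, one_div, inv_mul_cancel₀ (ne_of_gt (H_pos hn)), one_mul]

lemma S_abs_le (T : X → X) (x : X) (f : C(X, ℝ)) (m n : ℕ) :
    |(1 / H n) * ∑ j ∈ Finset.range n, (1 / (j + 1 : ℝ)) * f (T^[m + j] x)| ≤
      ‖mkOfCompact f‖ := by
  set C : ℝ := ‖mkOfCompact f‖ with hC
  have hC0 : (0:ℝ) ≤ C := norm_nonneg _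
  have habs : ∀ y : X, |f y| ≤ C := fun y => by
    simpa [hC] using (mkOfCompact f).norm_coe_le_norm y
  rcases Nat.eq_zero_or_pos n with hn | hn
  · simp [hn, hC0]
  · have hHpos : 0 < H n := H_pos hn
    have hsum : |∑ j ∈ Finset.range n, (1 / (j + 1 : ℝ)) * f (T^[m + j] x)| ≤ H n * C := by
      calc |∑ j ∈ Finset.range n, (1 / (j + 1 : ℝ)) * f (T^[m + j] x)|
          ≤ ∑ j ∈ Finset.range n, |(1 / (j + 1 : ℝ)) * f (T^[m + j] x)| :=
            Finset.abs_sum_le_sum_abs _ _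
        _ ≤ ∑ j ∈ Finset.range n, (1 / (j + 1 : ℝ)) * C := by
            apply Finset.sum_le_sum
            intro j _
            rw [abs_mul, abs_of_nonneg (by positivity : (0:ℝ) ≤ 1 / (j + 1 : ℝ))]
            exact mul_le_mul_of_nonneg_left (habs _) (by positivity)
        _ = H n * C := by rw [← Finset.sum_mul]; rfl
    rw [abs_mul, abs_of_nonneg (by positivity : (0:ℝ) ≤ 1 / H n)]
    calc (1 / H n) * |∑ j ∈ Finset.range n, (1 / (j + 1 : ℝ)) * f (T^[m + j] x)|
        ≤ (1 / H n) * (H n * C) := mul_le_mul_of_nonneg_left hsum (by positivity)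
      _ = C := by field_simp

lemma mem_VTlog_of_tendsto (T : X → X) (x : X) (ψ : ℕ → ℕ) (hψ : StrictMono ψ)
    (hψ1 : ∀ i, 1 ≤ ψ i) (ρ : ProbabilityMeasure X)
    (hten : Tendsto (fun i => pemp T x 0 (ψ i - 1)) atTop (𝓝 ρ)) : ρ ∈ VTlog T x := by
  refine ⟨ψ, hψ, fun f => ?_⟩
  have hint := MeasureTheory.ProbabilityMeasure.tendsto_iff_forall_integral_tendsto.mp
    hten (mkOfCompact f)
  have key : ∀ i, ∫ y, (mkOfCompact f) y ∂(pemp T x 0 (ψ i - 1) : Measure X) =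
      (1 / H (ψ i)) * ∑ k ∈ Finset.range (ψ i), (1 / (k + 1 : ℝ)) * f (T^[k] x) := by
    intro i
    have h1 : (ψ i - 1) + 1 = ψ i := Nat.succ_pred_eq_of_pos (hψ1 i)
    have h2 := integral_pemp T x 0 (ψ i - 1) f
    rw [h1] at h2
    simpa [Nat.zero_add] using h2
  have := hint.congr key
  simpa using this

lemma mem_VTtildeLog_of_tendsto (T : X → X) (x : X) (ψ : ℕ → ℕ) (hψ : StrictMono ψ)
    (hψ1 : ∀ i, 1 ≤ ψ i) (ρ : ProbabilityMeasure X)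
    (hten : Tendsto (fun i => pemp T x 0 (ψ i - 1)) atTop (𝓝 ρ)) : ρ ∈ VTtildeLog T x := by
  refine ⟨fun _ => 0, ψ, fun i => hψ1 i, by simpa using hψ.tendsto_atTop, fun f => ?_⟩
  have hint := MeasureTheory.ProbabilityMeasure.tendsto_iff_forall_integral_tendsto.mp
    hten (mkOfCompact f)
  have key : ∀ i, ∫ y, (mkOfCompact f) y ∂(pemp T x 0 (ψ i - 1) : Measure X) =
      (1 / H (ψ i - 0)) * ∑ j ∈ Finset.range (ψ i - 0), (1 / (j + 1 : ℝ)) * f (T^[0 + j] x) := by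
    intro i
    have h1 : (ψ i - 1) + 1 = ψ i := Nat.succ_pred_eq_of_pos (hψ1 i)
    have h2 := integral_pemp T x 0 (ψ i - 1) f
    rw [h1] at h2
    simpa [Nat.sub_zero] using h2
  have := hint.congr key
  simpa using this

lemma invariant_of_mem_VTlog (T : X → X) (hT : Continuous T) (x : X) (ρ : ProbabilityMeasure X)
    (h : ρ ∈ VTlog T x) : IsInvariantMeasure T ρ := by
  obtain ⟨n, hn, hconv⟩ := h
  apply isInvariant_of_tendsto T hT x (fun _ => 0) n hn.tendsto_atTop ρ
  intro f
  simpa [Nat.zero_add] using hconv f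

lemma invariant_of_mem_VTtildeLog (T : X → X) (hT : Continuous T) (x : X)
    (ρ : ProbabilityMeasure X) (h : ρ ∈ VTtildeLog T x) : IsInvariantMeasure T ρ := by
  obtain ⟨m, n, hmn, hlim, hconv⟩ := h
  exact isInvariant_of_tendsto T hT x m (fun i => n i - m i) hlim ρ hconv

lemma tendsto_S_full (T : X → X) (hT : Continuous T) (x : X) (μ : ProbabilityMeasure X)
    (huniq : ∀ (ψ : ℕ → ℕ), StrictMono ψ → (∀ i, 1 ≤ ψ i) →
      ∀ ρ : ProbabilityMeasure X,
        Tendsto (fun i => pemp T x 0 (ψ i - 1)) atTop (𝓝 ρ) → ρ = μ)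
    (f : C(X, ℝ)) :
    Tendsto (fun n => (1 / H n) * ∑ j ∈ Finset.range n, (1 / (j + 1 : ℝ)) * f (T^[j] x))
      atTop (𝓝 (∫ y, f y ∂(μ : Measure X))) := by
  apply Filter.tendsto_of_subseq_tendsto
  intro ns hns
  obtain ⟨ms₀, hms₀, hcomp⟩ := strictMono_subseq_of_tendsto_atTop hns
  set ψ : ℕ → ℕ := fun i => ns (ms₀ (i + 1)) with hψdef
  have hψmono : StrictMono ψ := fun a b h => hcomp (by omega)
  have hψ1 : ∀ i, 1 ≤ ψ i := fun i =>
    le_trans (by omega : 1 ≤ i + 1) ((hcomp.le_apply) : i + 1 ≤ (ns ∘ ms₀) (i + 1))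
  obtain ⟨φ₂, ρ, hφ₂, hten⟩ := exists_subseq_tendsto (fun i => pemp T x 0 (ψ i - 1))
  have hρ : ρ = μ :=
    huniq (fun i => ψ (φ₂ i)) (hψmono.comp hφ₂) (fun i => hψ1 _) ρ hten
  subst hρ
  refine ⟨fun i => ms₀ (φ₂ i + 1), ?_⟩
  have hint := MeasureTheory.ProbabilityMeasure.tendsto_iff_forall_integral_tendsto.mp
    hten (mkOfCompact f)
  have key : ∀ i, ∫ y, (mkOfCompact f) y ∂(pemp T x 0 (ψ (φ₂ i) - 1) : Measure X) =
      (1 / H (ψ (φ₂ i))) * ∑ j ∈ Finset.range (ψ (φ₂ i)), (1 / (j + 1 : ℝ)) * f (T^[j] x) := by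
    intro i
    have h1 : (ψ (φ₂ i) - 1) + 1 = ψ (φ₂ i) := Nat.succ_pred_eq_of_pos (hψ1 _)
    have h2 := integral_pemp T x 0 (ψ (φ₂ i) - 1) f
    rw [h1] at h2
    simpa [Nat.zero_add] using h2
  have := hint.congr key
  simpa using this

/-- Any invariant measure coincides with `μ` when all logarithmic averages converge to `μ`. -/
lemma invariant_eq_of_full (T : X → X) (hT : Continuous T) (μ : ProbabilityMeasure X)
    (hfull : ∀ (x : X) (f : C(X, ℝ)),
      Tendsto (fun n => (1 / H n) * ∑ j ∈ Finset.range n, (1 / (j + 1 : ℝ)) * f (T^[j] x))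
        atTop (𝓝 (∫ y, f y ∂(μ : Measure X))))
    (ν : ProbabilityMeasure X) (hν : IsInvariantMeasure T ν) : ν = μ := by
  apply integral_eq_of_invariant_integrals
  intro f
  set C : ℝ := ‖mkOfCompact f‖ with hC
  set F : ℕ → X → ℝ :=
    fun n y => (1 / H n) * ∑ j ∈ Finset.range n, (1 / (j + 1 : ℝ)) * f (T^[j] y) with hF
  have hFc : ∀ n, Continuous (F n) := by
    intro n
    exact continuous_const.mul (continuous_finset_sum _ fun j _ =>
      continuous_const.mul (f.continuous.comp (hT.iterate j)))
  have hDCT := MeasureTheory.tendsto_integral_of_dominated_convergence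
    (μ := (ν : Measure X)) (F := F) (f := fun _ => ∫ y, f y ∂(μ : Measure X))
    (fun _ => C)
    (fun n => (hFc n).aestronglyMeasurable)
    (MeasureTheory.integrable_const C)
    (fun n => MeasureTheory.ae_of_all _ fun y => by
      rw [Real.norm_eq_abs]
      have h := S_abs_le T y f 0 n
      simp only [Nat.zero_add] at h
      exact h)
    (MeasureTheory.ae_of_all _ fun y => hfull y f)
  have hconst : ∫ y, (fun _ : X => ∫ z, f z ∂(μ : Measure X)) y ∂(ν : Measure X) =
      ∫ z, f z ∂(μ : Measure X) := by
    simp [measure_univ]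
  rw [hconst] at hDCT
  have heq : (fun n => ∫ y, F n y ∂(ν : Measure X)) =ᶠ[atTop]
      (fun _ => ∫ y, f y ∂(ν : Measure X)) := by
    filter_upwards [eventually_ge_atTop 1] with n hn
    exact integral_S_eq T hT ν hν f hn
  exact tendsto_nhds_unique (hDCT.congr' heq) tendsto_const_nhds |>.symm

end UELogAux

set_option maxHeartbeats 1000000 in
/-- `(X,T)` is uniquely ergodic if and only if there is a `T`-invariant `μ` with
`V^log_T(x) = {μ}` for every `x`, if and only if there is a `T`-invariant `μ` with
`Ṽ^log_T(x) = {μ}` for every `x`. -/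
theorem uniquelyErgodic_iff_VTlog_iff_VTtildeLog
    {X : Type*} [MetricSpace X] [CompactSpace X] [Nonempty X]
    [MeasurableSpace X] [BorelSpace X]
    (T : X → X) (hT : Continuous T) :
    ((∃ μ : ProbabilityMeasure X, {ν : ProbabilityMeasure X | IsInvariantMeasure T ν} = {μ}) ↔
      (∃ μ : ProbabilityMeasure X, IsInvariantMeasure T μ ∧ ∀ x : X, VTlog T x = {μ})) ∧
    ((∃ μ : ProbabilityMeasure X, {ν : ProbabilityMeasure X | IsInvariantMeasure T ν} = {μ}) ↔
      (∃ μ : ProbabilityMeasure X, IsInvariantMeasure T μ ∧ ∀ x : X, VTtildeLog T x = {μ})) := by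
  have inv_of_ue : ∀ μ : ProbabilityMeasure X,
      {ν : ProbabilityMeasure X | IsInvariantMeasure T ν} = {μ} → IsInvariantMeasure T μ := by
    intro μ h1
    have : μ ∈ {ν : ProbabilityMeasure X | IsInvariantMeasure T ν} := by
      rw [h1]; exact Set.mem_singleton μ
    exact this
  constructor
  · constructor
    · rintro ⟨μ, h1⟩
      refine ⟨μ, inv_of_ue μ h1, fun x => ?_⟩
      apply Set.eq_singleton_iff_unique_mem.mpr
      constructor
      · obtain ⟨φ, ρ', hφ, hten⟩ := exists_subseq_tendsto (fun i => pemp T x 0 i)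
        have hψ : StrictMono fun i => φ i + 1 := fun a b h => by
          have := hφ h; show φ a + 1 < φ b + 1; omega
        have hten' : Tendsto (fun i => pemp T x 0 ((φ i + 1) - 1)) atTop (𝓝 ρ') := by
          simpa [Nat.add_sub_cancel] using hten
        have hmem : ρ' ∈ VTlog T x :=
          mem_VTlog_of_tendsto T x _ hψ (fun i => by show 1 ≤ φ i + 1; omega) ρ' hten'
        have heq : ρ' = μ := by
          have h2 : ρ' ∈ {ν : ProbabilityMeasure X | IsInvariantMeasure T ν} :=
            invariant_of_mem_VTlog T hT x ρ' hmem
          rw [h1] at h2; exact h2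
        rwa [heq] at hmem
      · intro ρ hρ
        have h2 : ρ ∈ {ν : ProbabilityMeasure X | IsInvariantMeasure T ν} :=
          invariant_of_mem_VTlog T hT x ρ hρ
        rw [h1] at h2; exact h2
    · rintro ⟨μ, hμinv, h2⟩
      refine ⟨μ, ?_⟩
      apply Set.eq_singleton_iff_unique_mem.mpr
      refine ⟨hμinv, fun ν hν => ?_⟩
      refine invariant_eq_of_full T hT μ (fun x f => ?_) ν hν
      refine tendsto_S_full T hT x μ (fun ψ hψ hψ1 ρ hten => ?_) f
      have hmem := mem_VTlog_of_tendsto T x ψ hψ hψ1 ρ hten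
      rw [h2 x] at hmem
      exact hmem
  · constructor
    · rintro ⟨μ, h1⟩
      refine ⟨μ, inv_of_ue μ h1, fun x => ?_⟩
      apply Set.eq_singleton_iff_unique_mem.mpr
      constructor
      · obtain ⟨φ, ρ', hφ, hten⟩ := exists_subseq_tendsto (fun i => pemp T x 0 i)
        have hψ : StrictMono fun i => φ i + 1 := fun a b h => by
          have := hφ h; show φ a + 1 < φ b + 1; omega
        have hten' : Tendsto (fun i => pemp T x 0 ((φ i + 1) - 1)) atTop (𝓝 ρ') := by
          simpa [Nat.add_sub_cancel] using hten
        have hmem : ρ' ∈ VTtildeLog T x :=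
          mem_VTtildeLog_of_tendsto T x _ hψ (fun i => by show 1 ≤ φ i + 1; omega) ρ' hten'
        have heq : ρ' = μ := by
          have h2 : ρ' ∈ {ν : ProbabilityMeasure X | IsInvariantMeasure T ν} :=
            invariant_of_mem_VTtildeLog T hT x ρ' hmem
          rw [h1] at h2; exact h2
        rwa [heq] at hmem
      · intro ρ hρ
        have h2 : ρ ∈ {ν : ProbabilityMeasure X | IsInvariantMeasure T ν} :=
          invariant_of_mem_VTtildeLog T hT x ρ hρ
        rw [h1] at h2; exact h2
    · rintro ⟨μ, hμinv, h2⟩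
      refine ⟨μ, ?_⟩
      apply Set.eq_singleton_iff_unique_mem.mpr
      refine ⟨hμinv, fun ν hν => ?_⟩
      refine invariant_eq_of_full T hT μ (fun x f => ?_) ν hν
      refine tendsto_S_full T hT x μ (fun ψ hψ hψ1 ρ hten => ?_) f
      have hmem := mem_VTtildeLog_of_tendsto T x ψ hψ hψ1 ρ hten
      rw [h2 x] at hmem
      exact hmem
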